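/- arXiv:1705.01743 — 3 statements merged into one kernel-verified Lean document; each statement's English description precedes it below -/
import Mathlib

section
/- Let n ≥ 1 and let U be a nonempty connected open subset of ℂⁿ. Let T : ℂⁿ → ℝ be twice continuously differentiable on U and pluriharmonic on U, i.e. for every z ∈ U and every v ∈ ℂⁿ one has D²T(z)(v,v) + D²T(z)(i·v, i·v) = 0, where D²T(z) denotes the second (real) Fréchet derivative of T at z. If T attains its minimum over U at some point x₀ ∈ U (that is, T(x₀) ≤ T(x) for all x ∈ U), then T is constant on U. -/
set_option maxHeartbeats 1000000

open Complex Metric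


/-- A holomorphic function on a closed ball has a primitive on any smaller open ball. -/
lemma exists_primitive (g : ℂ → ℂ) (c : ℂ) (r : NNReal) (r' : ℝ) (hr' : 0 < r') (hrr : r' < r)
    (hg : DifferentiableOn ℂ g (closedBall c r)) :
    ∃ F : ℂ → ℂ, ∀ w ∈ ball c r', HasDerivAt F (g w) w := by
  have hr : 0 < r := by exact_mod_cast hr'.trans hrr
  obtain ⟨p, hps⟩ : ∃ p, HasFPowerSeriesOnBall g p c r := ⟨_, hg.hasFPowerSeriesOnBall hr⟩
  set a : ℕ → ℂ := fun n => p.coeff n with ha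
  have hsum : ∀ w ∈ ball c r', HasSum (fun n => (w - c) ^ n • a n) (g w) := by
    intro w hw
    have hw' : w - c ∈ Metric.eball (0 : ℂ) r := by
      rw [EMetric.mem_ball, edist_zero_right]
      have : ‖w - c‖ < (r : ℝ) := lt_trans (by simpa [dist_eq_norm] using hw) hrr
      exact_mod_cast this
    have := hps.hasSum hw'
    simpa [FormalMultilinearSeries.apply_eq_pow_smul_coeff] using this
  set u : ℕ → ℝ := fun n => ‖p n‖ * r' ^ n with hu
  have hu_sum : Summable u := by
    have h1 : (r'.toNNReal : ENNReal) < p.radius := by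
      refine lt_of_lt_of_le ?_ hps.r_le
      rw [ENNReal.coe_lt_coe]
      exact (Real.toNNReal_lt_iff_lt_coe hr'.le).mpr hrr
    have := p.summable_norm_mul_pow h1
    simpa only [Real.coe_toNNReal r' hr'.le] using this
  set G : ℕ → ℂ → ℂ := fun n w => ((n : ℂ) + 1)⁻¹ * (a n * (w - c) ^ (n + 1)) with hG
  have hd : ∀ n w, HasDerivAt (G n) (a n * (w - c) ^ n) w := by
    intro n w
    have h1 : HasDerivAt (fun w : ℂ => (w - c) ^ (n + 1))
        (((n : ℂ) + 1) * (w - c) ^ n) w := by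
      have := ((hasDerivAt_id w).sub_const c).fun_pow (n + 1)
      simpa [Nat.add_sub_cancel] using this
    have h2 := (h1.const_mul (a n)).const_mul (((n : ℂ) + 1)⁻¹)
    refine h2.congr_deriv ?_
    have hne : ((n : ℂ) + 1) ≠ 0 := Nat.cast_add_one_ne_zero n
    rw [← inv_mul_cancel_left₀ hne (a n * (w - c) ^ n)]
    ring
  have hbound : ∀ n w, w ∈ ball c r' → ‖a n * (w - c) ^ n‖ ≤ u n := by
    intro n w hw
    have h1 : ‖a n‖ ≤ ‖p n‖ := le_of_eq (p.norm_apply_eq_norm_coef).symm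
    have h2 : ‖(w - c) ^ n‖ ≤ r' ^ n := by
      rw [norm_pow]
      exact pow_le_pow_left₀ (norm_nonneg _) (by simpa [dist_eq_norm] using (mem_ball.mp hw).le) n
    calc ‖a n * (w - c) ^ n‖ = ‖a n‖ * ‖(w - c) ^ n‖ := norm_mul _ _
      _ ≤ ‖p n‖ * r' ^ n := mul_le_mul h1 h2 (norm_nonneg _) (norm_nonneg _)
  refine ⟨fun w => ∑' n, G n w, fun w hw => ?_⟩
  have := hasDerivAt_tsum_of_isPreconnected hu_sum isOpen_ball
    (convex_ball c r').isPreconnected (fun n y _ => hd n y)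
    hbound (mem_ball_self hr') ?_ hw
  · refine HasDerivAt.congr_deriv this ?_
    refine (((hsum w hw).tsum_eq).symm.trans ?_).symm
    congr 1; ext n; rw [smul_eq_mul]; ring
  · apply Summable.of_norm_bounded hu_sum
    intro n
    simp only [hG, sub_self, zero_pow (Nat.succ_ne_zero n), mul_zero, norm_zero]
    positivity


/-- evaluation + CR combination as a continuous linear map -/
noncomputable def Gcr : (ℂ →L[ℝ] ℝ) →L[ℝ] ℂ :=
  Complex.ofRealCLM.comp (ContinuousLinearMap.apply ℝ ℝ (1 : ℂ))
    - Complex.I • (Complex.ofRealCLM.comp (ContinuousLinearMap.apply ℝ ℝ (Complex.I : ℂ)))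

lemma Gcr_apply (L : ℂ →L[ℝ] ℝ) : Gcr L = (L 1 : ℂ) - Complex.I * (L Complex.I : ℂ) := by
  simp [Gcr, smul_eq_mul]

/-- A C² harmonic function on a ball in ℂ that attains its minimum at the center
is constant on the ball. -/
lemma harmonic_ball_min (f : ℂ → ℝ) (c : ℂ) (ρ : ℝ) (hρ : 0 < ρ)
    (hf : ContDiffOn ℝ 2 f (ball c ρ))
    (hharm : ∀ z ∈ ball c ρ,
      fderiv ℝ (fderiv ℝ f) z 1 1 + fderiv ℝ (fderiv ℝ f) z Complex.I Complex.I = 0)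
    (hmin : ∀ z ∈ ball c ρ, f c ≤ f z) :
    ∀ z ∈ ball c ρ, f z = f c := by
  intro z hz
  set B := ball c ρ with hB
  have hO : IsOpen B := isOpen_ball
  have hdiff : DifferentiableOn ℝ f B := hf.differentiableOn two_ne_zero
  have hderiv1 : ContDiffOn ℝ 1 (fderiv ℝ f) B :=
    hf.fderiv_of_isOpen hO (by norm_num)
  have hd2 : ∀ w ∈ B, DifferentiableAt ℝ (fderiv ℝ f) w := fun w hw =>
    ((hderiv1.differentiableOn one_ne_zero) w hw).differentiableAt (hO.mem_nhds hw)
  have hd1 : ∀ w ∈ B, DifferentiableAt ℝ f w := fun w hw =>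
    (hdiff w hw).differentiableAt (hO.mem_nhds hw)
  -- the function g = f_x - i f_y
  set g : ℂ → ℂ := fun w => Gcr (fderiv ℝ f w) with hg
  have hgdiff : DifferentiableOn ℂ g B := by
    intro w hw
    have hD2 : HasFDerivAt (fderiv ℝ f) (fderiv ℝ (fderiv ℝ f) w) w :=
      (hd2 w hw).hasFDerivAt
    set D2 := fderiv ℝ (fderiv ℝ f) w with hD2def
    have hsymm : ∀ v u : ℂ, D2 v u = D2 u v := by
      intro v u
      refine second_derivative_symmetric_of_eventually (f := f) ?_ hD2 v u
      filter_upwards [hO.mem_nhds hw] with y hy using (hd1 y hy).hasFDerivAt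
    have hharm' : D2 Complex.I Complex.I = -(D2 1 1) := by
      have := hharm w hw
      linarith
    -- real derivative of g
    have hgR : HasFDerivAt g (Gcr.comp D2) w := Gcr.hasFDerivAt.comp w hD2
    -- the derivative is complex-linear
    set d : ℂ := Gcr (D2 1) with hd
    have hlin : (ContinuousLinearMap.smulRight (1 : ℂ →L[ℂ] ℂ) d).restrictScalars ℝ
        = Gcr.comp D2 := by
      apply ContinuousLinearMap.ext
      intro u
      have hu : u = u.re • (1 : ℂ) + u.im • Complex.I := by
        simp [Complex.real_smul]
      show u • d = Gcr (D2 u)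
      conv_rhs => rw [hu]
      rw [map_add, map_smul, map_smul, map_add, map_smul, map_smul]
      have key : Gcr (D2 Complex.I) = Complex.I * Gcr (D2 1) := by
        rw [Gcr_apply, Gcr_apply, hsymm Complex.I 1, hharm']
        push_cast
        ring_nf
        rw [Complex.I_sq]
        ring
      rw [key, ← hd]
      simp only [Complex.real_smul, smul_eq_mul]
      nth_rewrite 1 [← Complex.re_add_im u]
      ring
    have : HasFDerivAt g (ContinuousLinearMap.smulRight (1 : ℂ →L[ℂ] ℂ) d) w :=
      hasFDerivAt_of_restrictScalars ℝ hgR hlin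
    exact this.differentiableAt.differentiableWithinAt
  -- main argument
  by_cases hzc : z = c
  · rw [hzc]
  · have hdzc : 0 < dist z c := dist_pos.mpr hzc
    set r2 : ℝ := (dist z c + ρ) / 2 with hr2
    have hdz : dist z c < ρ := mem_ball.mp hz
    have hr2ρ : r2 < ρ := by rw [hr2]; linarith
    have hr2pos : 0 < r2 := by rw [hr2]; linarith
    set r' : ℝ := (dist z c + r2) / 2 with hr'
    have hzr' : dist z c < r' := by rw [hr']; linarith
    have hr'r2 : r' < r2 := by rw [hr']; linarith
    have hr'pos : 0 < r' := lt_trans hdzc hzr'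
    have hcb : closedBall c r2 ⊆ B := closedBall_subset_ball hr2ρ
    obtain ⟨F, hF⟩ := exists_primitive g c r2.toNNReal r' hr'pos
      (by rw [Real.coe_toNNReal r2 hr2pos.le]; exact hr'r2)
      (by rw [Real.coe_toNNReal r2 hr2pos.le]; exact hgdiff.mono hcb)
    have hb' : ball c r' ⊆ B := ball_subset_ball (le_of_lt (hr'r2.trans hr2ρ))
    -- f - Re F is constant on ball c r'
    have hzero : ∀ y ∈ ball c r', HasFDerivAt (fun w => f w - (F w).re) (0 : ℂ →L[ℝ] ℝ) y := by
      intro y hy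
      have hFy : HasFDerivAt F
          ((ContinuousLinearMap.smulRight (1 : ℂ →L[ℂ] ℂ) (g y)).restrictScalars ℝ) y :=
        ((hF y hy).hasFDerivAt).restrictScalars ℝ
      have hRe : HasFDerivAt (fun w => (F w).re)
          (Complex.reCLM.comp
            ((ContinuousLinearMap.smulRight (1 : ℂ →L[ℂ] ℂ) (g y)).restrictScalars ℝ)) y :=
        (Complex.reCLM.hasFDerivAt).comp y hFy
      have hfy : HasFDerivAt f (fderiv ℝ f y) y := (hd1 y (hb' hy)).hasFDerivAt
      have heq : fderiv ℝ f y - Complex.reCLM.comp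
          ((ContinuousLinearMap.smulRight (1 : ℂ →L[ℂ] ℂ) (g y)).restrictScalars ℝ) = 0 := by
        apply ContinuousLinearMap.ext; intro u
        have hu : u = u.re • (1 : ℂ) + u.im • Complex.I := by simp [Complex.real_smul]
        have hL : (fderiv ℝ f y) u
            = u.re * (fderiv ℝ f y 1) + u.im * (fderiv ℝ f y Complex.I) := by
          conv_lhs => rw [hu]
          rw [map_add, map_smul, map_smul]
          simp [smul_eq_mul]
        simp only [ContinuousLinearMap.sub_apply, ContinuousLinearMap.comp_apply,
          ContinuousLinearMap.coe_restrictScalars', ContinuousLinearMap.smulRight_apply,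
          ContinuousLinearMap.one_apply, ContinuousLinearMap.zero_apply, Complex.reCLM_apply,
          smul_eq_mul]
        rw [hL]
        show _ - (u * g y).re = 0
        rw [hg]
        simp only [Gcr_apply, Complex.mul_re, Complex.sub_re, Complex.sub_im, Complex.mul_im,
          Complex.ofReal_re, Complex.ofReal_im, Complex.I_re, Complex.I_im]
        ring
      have := hfy.sub hRe
      rwa [heq] at this
    have hψ : ∀ w ∈ ball c r', f w - (F w).re = f c - (F c).re := by
      intro w hw
      exact (convex_ball c r').is_const_of_fderivWithin_eq_zero
        (fun y hy => (hzero y hy).differentiableAt.differentiableWithinAt)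
        (fun y hy => by
          rw [fderivWithin_of_isOpen isOpen_ball hy]
          exact (hzero y hy).fderiv)
        hw (mem_ball_self hr'pos)
    have hFdiff : DifferentiableOn ℂ F (ball c r') := fun y hy =>
      (hF y hy).differentiableAt.differentiableWithinAt
    have hh : DifferentiableOn ℂ (fun w => Complex.exp (-F w)) (ball c r') := hFdiff.neg.cexp
    have hmax : IsMaxOn (norm ∘ fun w => Complex.exp (-F w)) (ball c r') c := by
      rw [isMaxOn_iff]
      intro w hw
      simp only [Function.comp_apply, Complex.norm_exp, Complex.neg_re]
      apply Real.exp_le_exp.mpr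
      have h1 := hψ w hw
      have h2 := hmin w (hb' hw)
      linarith
    have hzball : z ∈ ball c r' := mem_ball.mpr hzr'
    have hEq := Complex.eqOn_of_isPreconnected_of_isMaxOn_norm
      (convex_ball c r').isPreconnected isOpen_ball hh (mem_ball_self hr'pos) hmax hzball
    have habs : Real.exp (-(F z).re) = Real.exp (-(F c).re) := by
      have := congrArg norm hEq
      simpa [Complex.norm_exp] using this
    have h3 : -(F z).re = -(F c).re := Real.exp_eq_exp.mp habs
    have h4 := hψ z hzball
    linarith

/-- A C² pluriharmonic function on a nonempty connected open subset of ℂⁿ that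
attains its minimum there is constant. -/
theorem pluriharmonic_min_const
    (n : ℕ) (hn : 1 ≤ n)
    (U : Set (EuclideanSpace ℂ (Fin n)))
    (hUopen : IsOpen U) (hUconn : IsConnected U)
    (T : EuclideanSpace ℂ (Fin n) → ℝ)
    (hT : ContDiffOn ℝ 2 T U)
    (hpluri : ∀ z ∈ U, ∀ v : EuclideanSpace ℂ (Fin n),
      fderiv ℝ (fderiv ℝ T) z v v
        + fderiv ℝ (fderiv ℝ T) z (Complex.I • v) (Complex.I • v) = 0)
    (x₀ : EuclideanSpace ℂ (Fin n)) (hx₀ : x₀ ∈ U)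
    (hmin : ∀ x ∈ U, T x₀ ≤ T x) :
    ∀ x ∈ U, T x = T x₀ := by
  classical
  have hTd1 : ∀ x ∈ U, DifferentiableAt ℝ T x := fun x hx =>
    ((hT.differentiableOn two_ne_zero) x hx).differentiableAt (hUopen.mem_nhds hx)
  have hTd2cont : ContDiffOn ℝ 1 (fderiv ℝ T) U := hT.fderiv_of_isOpen hUopen (by norm_num)
  have hTd2 : ∀ x ∈ U, DifferentiableAt ℝ (fderiv ℝ T) x := fun x hx =>
    ((hTd2cont.differentiableOn one_ne_zero) x hx).differentiableAt (hUopen.mem_nhds hx)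
  -- the set where T equals its minimum is open
  have hSopen : IsOpen {x | x ∈ U ∧ T x = T x₀} := by
    rw [Metric.isOpen_iff]
    rintro x ⟨hxU, hxT⟩
    obtain ⟨r, hr0, hball⟩ := Metric.isOpen_iff.mp hUopen x hxU
    refine ⟨r, hr0, fun y hy => ⟨hball hy, ?_⟩⟩
    by_cases hyx : y = x
    · rw [hyx, hxT]
    · set v := y - x with hv
      have hvne : v ≠ 0 := sub_ne_zero.mpr hyx
      have hvn : 0 < ‖v‖ := norm_pos_iff.mpr hvne
      set ρ : ℝ := r / ‖v‖ with hρ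
      have hyr : ‖v‖ < r := by simpa [hv, dist_eq_norm] using hy
      have hρ1 : 1 < ρ := (one_lt_div hvn).mpr hyr
      have hρ0 : 0 < ρ := lt_trans one_pos hρ1
      set A : ℂ →L[ℝ] EuclideanSpace ℂ (Fin n) :=
        ((ContinuousLinearMap.id ℂ ℂ).smulRight v).restrictScalars ℝ with hA
      set L : ℂ → EuclideanSpace ℂ (Fin n) := fun w => x + w • v with hL
      have hAapp : ∀ w : ℂ, A w = w • v := fun w => rfl
      have hLmem : ∀ w ∈ ball (0 : ℂ) ρ, L w ∈ U := by
        intro w hw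
        apply hball
        rw [mem_ball, dist_eq_norm]
        have : ‖w • v‖ = ‖w‖ * ‖v‖ := norm_smul w v
        have hwn : ‖w‖ < ρ := by simpa [dist_eq_norm] using hw
        calc ‖x + w • v - x‖ = ‖w‖ * ‖v‖ := by rw [add_sub_cancel_left, this]
          _ < ρ * ‖v‖ := by exact mul_lt_mul_of_pos_right hwn hvn
          _ = r := by rw [hρ]; field_simp
      have hAd : ∀ w : ℂ, HasFDerivAt L A w := fun w => A.hasFDerivAt.const_add x
      have hLcd : ContDiff ℝ 2 L := contDiff_const.add (A.contDiff)
      have hφC2 : ContDiffOn ℝ 2 (T ∘ L) (ball (0 : ℂ) ρ) :=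
        hT.comp (hLcd.contDiffOn) (fun w hw => hLmem w hw)
      have hφ1 : ∀ w ∈ ball (0 : ℂ) ρ, fderiv ℝ (T ∘ L) w = (fderiv ℝ T (L w)).comp A :=
        fun w hw => (((hTd1 _ (hLmem w hw)).hasFDerivAt).comp w (hAd w)).fderiv
      set P : (EuclideanSpace ℂ (Fin n) →L[ℝ] ℝ) →L[ℝ] (ℂ →L[ℝ] ℝ) :=
        (ContinuousLinearMap.compL ℝ ℂ (EuclideanSpace ℂ (Fin n)) ℝ).flip A with hP
      have hPapp : ∀ f : EuclideanSpace ℂ (Fin n) →L[ℝ] ℝ, P f = f.comp A := fun f => rfl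
      have hφ2 : ∀ w ∈ ball (0 : ℂ) ρ,
          fderiv ℝ (fderiv ℝ (T ∘ L)) w
            = P.comp ((fderiv ℝ (fderiv ℝ T) (L w)).comp A) := by
        intro w hw
        have hEv : fderiv ℝ (T ∘ L) =ᶠ[nhds w] fun w' => P (fderiv ℝ T (L w')) := by
          filter_upwards [isOpen_ball.mem_nhds hw] with w' hw'
          rw [hφ1 w' hw', hPapp]
        rw [hEv.fderiv_eq]
        exact (P.hasFDerivAt.comp w
          (((hTd2 _ (hLmem w hw)).hasFDerivAt).comp w (hAd w))).fderiv
      have hφharm : ∀ w ∈ ball (0 : ℂ) ρ,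
          fderiv ℝ (fderiv ℝ (T ∘ L)) w 1 1
            + fderiv ℝ (fderiv ℝ (T ∘ L)) w Complex.I Complex.I = 0 := by
        intro w hw
        rw [hφ2 w hw]
        have := hpluri (L w) (hLmem w hw) v
        simp only [ContinuousLinearMap.comp_apply, hPapp, hAapp, one_smul]
        exact this
      have hφmin : ∀ w ∈ ball (0 : ℂ) ρ, (T ∘ L) 0 ≤ (T ∘ L) w := by
        intro w hw
        have h0 : (T ∘ L) 0 = T x := by simp [hL]
        rw [h0, hxT]
        exact hmin _ (hLmem w hw)
      have h1mem : (1 : ℂ) ∈ ball (0 : ℂ) ρ := by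
        rw [mem_ball, dist_zero_right]
        simpa using hρ1
      have hconst := harmonic_ball_min (T ∘ L) 0 ρ hρ0 hφC2 hφharm
        (fun w hw => by
          have := hφmin w hw
          simpa [hL] using this)
        1 h1mem
      have hL1 : L 1 = y := by rw [hL]; simp [hv]
      have hL0 : L 0 = x := by simp [hL]
      calc T y = (T ∘ L) 1 := by rw [Function.comp_apply, hL1]
        _ = (T ∘ L) 0 := hconst
        _ = T x₀ := by rw [Function.comp_apply, hL0, hxT]
  -- the set where T differs from its minimum is open
  have hVopen : IsOpen {x | x ∈ U ∧ T x ≠ T x₀} := by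
    rw [isOpen_iff_mem_nhds]
    rintro x ⟨hxU, hxT⟩
    have hc : ContinuousAt T x := (hT.continuousOn x hxU).continuousAt (hUopen.mem_nhds hxU)
    have h1 : T ⁻¹' {T x₀}ᶜ ∈ nhds x :=
      hc.preimage_mem_nhds (isOpen_compl_singleton.mem_nhds hxT)
    filter_upwards [Filter.inter_mem (hUopen.mem_nhds hxU) h1] with z hz
    exact ⟨hz.1, hz.2⟩
  -- connectedness
  intro x hx
  by_contra hne
  have hpc := hUconn.isPreconnected
  have hcover : U ⊆ {x | x ∈ U ∧ T x = T x₀} ∪ {x | x ∈ U ∧ T x ≠ T x₀} := by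
    intro z hz
    by_cases h : T z = T x₀
    · exact Or.inl ⟨hz, h⟩
    · exact Or.inr ⟨hz, h⟩
  have h1 : (U ∩ {x | x ∈ U ∧ T x = T x₀}).Nonempty := ⟨x₀, hx₀, hx₀, rfl⟩
  have h2 : (U ∩ {x | x ∈ U ∧ T x ≠ T x₀}).Nonempty := ⟨x, hx, hx, hne⟩
  obtain ⟨z, -, ⟨-, hz1⟩, ⟨-, hz2⟩⟩ := hpc _ _ hSopen hVopen hcover h1 h2
  exact hz2 hz1
end

section
/- Let U be a subset of ℂ, let s₀ ∈ U, and let C > 0 and L > 0. Let η : ℂ → ℝ be a function such that for every s ∈ U: η(s) > 0, η is (real) differentiable at s, and |Dη(s)(1)| ≤ C·η(s) and |Dη(s)(i)| ≤ C·η(s). Assume that every point s ∈ U can be joined to s₀ by a C¹ path of length at most L in U, i.e. there exists a continuously differentiable map γ : [0,1] → ℂ with γ(0) = s₀, γ(1) = s, γ(t) ∈ U for all t ∈ [0,1], and ∫₀¹ ‖γ'(t)‖ dt ≤ L. Then η(s) ≤ η(s₀)·exp(2·C·L) for every s ∈ U; in particular η is uniformly bounded on U. -/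
/-- Pointwise bound on the full real derivative from bounds on partials. -/
lemma fderiv_bound_aux (η : ℂ → ℝ) (C : ℝ) (s : ℂ) (hx : |fderiv ℝ η s 1| ≤ C * η s)
    (hy : |fderiv ℝ η s Complex.I| ≤ C * η s) (v : ℂ) :
    |fderiv ℝ η s v| ≤ 2 * C * η s * ‖v‖ := by
  have hv : (v.re : ℝ) • (1 : ℂ) + (v.im : ℝ) • Complex.I = v := by
    simp [Complex.ext_iff]
  have heq : fderiv ℝ η s v = v.re * fderiv ℝ η s 1 + v.im * fderiv ℝ η s Complex.I := by
    conv_lhs => rw [← hv]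
    rw [map_add, map_smul, map_smul]
    simp
  have hre : |v.re| ≤ ‖v‖ := by exact Complex.abs_re_le_norm v
  have him : |v.im| ≤ ‖v‖ := by exact Complex.abs_im_le_norm v
  have hCη : (0:ℝ) ≤ C * η s := le_trans (abs_nonneg _) hx
  rw [heq]
  calc |v.re * fderiv ℝ η s 1 + v.im * fderiv ℝ η s Complex.I|
      ≤ |v.re * fderiv ℝ η s 1| + |v.im * fderiv ℝ η s Complex.I| := abs_add_le _ _
    _ = |v.re| * |fderiv ℝ η s 1| + |v.im| * |fderiv ℝ η s Complex.I| := by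
        rw [abs_mul, abs_mul]
    _ ≤ ‖v‖ * (C * η s) + ‖v‖ * (C * η s) :=
        add_le_add (mul_le_mul hre hx (abs_nonneg _) (norm_nonneg _))
          (mul_le_mul him hy (abs_nonneg _) (norm_nonneg _))
    _ = 2 * C * η s * ‖v‖ := by ring

/-- Lemma 3.4 of the paper: a positive differentiable function on `U ⊆ ℂ`
whose partial derivatives are dominated by `C·η`, on a set where every point
is joined to `s₀` by a C¹ path of length at most `L` inside `U`, satisfies
`η(s) ≤ η(s₀)·exp(2CL)` on `U`. -/
theorem bounded_on_path_connected_of_partial_derivative_bound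
    (U : Set ℂ) (s₀ : ℂ) (hs₀ : s₀ ∈ U)
    (C L : ℝ) (hC : 0 < C) (hL : 0 < L)
    (η : ℂ → ℝ)
    (hpos : ∀ s ∈ U, 0 < η s)
    (hdiff : ∀ s ∈ U, DifferentiableAt ℝ η s)
    (hx : ∀ s ∈ U, |fderiv ℝ η s 1| ≤ C * η s)
    (hy : ∀ s ∈ U, |fderiv ℝ η s Complex.I| ≤ C * η s)
    (hpath : ∀ s ∈ U, ∃ γ : ℝ → ℂ,
      ContDiffOn ℝ 1 γ (Set.Icc 0 1) ∧
      γ 0 = s₀ ∧ γ 1 = s ∧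
      (∀ t ∈ Set.Icc (0:ℝ) 1, γ t ∈ U) ∧
      (∫ t in (0:ℝ)..1, ‖derivWithin γ (Set.Icc 0 1) t‖) ≤ L) :
    ∀ s ∈ U, η s ≤ η s₀ * Real.exp (2 * C * L) := by
  intro s hs
  obtain ⟨γ, hγ, hγ0, hγ1, hγU, hlen⟩ := hpath s hs
  set g : ℝ → ℝ := fun t => ‖derivWithin γ (Set.Icc 0 1) t‖ with hgdef
  have hgcont : ContinuousOn g (Set.Icc 0 1) :=
    (hγ.continuousOn_derivWithin (uniqueDiffOn_Icc one_pos) le_rfl).norm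
  have hgint : MeasureTheory.IntegrableOn g (Set.uIcc (0:ℝ) 1) := by
    rw [Set.uIcc_of_le (by norm_num : (0:ℝ) ≤ 1)]
    exact hgcont.integrableOn_Icc
  set F : ℝ → ℝ := fun t => Real.log (η (γ t)) - 2 * C * ∫ u in (0:ℝ)..t, g u with hFdef
  -- continuity of F on Icc 0 1
  have hγc : ContinuousOn γ (Set.Icc 0 1) := hγ.continuousOn
  have hηγc : ContinuousOn (fun t => η (γ t)) (Set.Icc 0 1) := fun t ht =>
    ((hdiff _ (hγU t ht)).continuousAt).comp_continuousWithinAt (hγc t ht)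
  have hFc : ContinuousOn F (Set.Icc 0 1) := by
    apply ContinuousOn.sub
    · exact hηγc.log (fun t ht => (hpos _ (hγU t ht)).ne')
    · apply ContinuousOn.mul continuousOn_const
      have := intervalIntegral.continuousOn_primitive_interval (a := (0:ℝ)) (b := (1:ℝ))
        (f := g) (μ := MeasureTheory.volume) hgint
      rwa [Set.uIcc_of_le (by norm_num : (0:ℝ) ≤ 1)] at this
  -- derivative of F on the interior
  have key : ∀ t ∈ Set.Ioo (0:ℝ) 1, HasDerivAt F
      ((η (γ t))⁻¹ * fderiv ℝ η (γ t) (derivWithin γ (Set.Icc 0 1) t) - 2 * C * g t) t := by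
    intro t ht
    have htIcc : t ∈ Set.Icc (0:ℝ) 1 := Set.Ioo_subset_Icc_self ht
    have hmem : Set.Icc (0:ℝ) 1 ∈ nhds t := Icc_mem_nhds ht.1 ht.2
    have hγd : HasDerivAt γ (derivWithin γ (Set.Icc 0 1) t) t :=
      ((hγ.differentiableOn one_ne_zero t htIcc).hasDerivWithinAt).hasDerivAt hmem
    have hηd : HasFDerivAt η (fderiv ℝ η (γ t)) (γ t) := (hdiff _ (hγU t htIcc)).hasFDerivAt
    have hcomp : HasDerivAt (fun u => η (γ u))
        (fderiv ℝ η (γ t) (derivWithin γ (Set.Icc 0 1) t)) t := hηd.comp_hasDerivAt t hγd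
    have hlog : HasDerivAt (fun u => Real.log (η (γ u)))
        ((η (γ t))⁻¹ * fderiv ℝ η (γ t) (derivWithin γ (Set.Icc 0 1) t)) t :=
      by have h := (Real.hasDerivAt_log (hpos _ (hγU t htIcc)).ne').comp t hcomp; exact h
    have hint : HasDerivAt (fun u => ∫ v in (0:ℝ)..u, g v) (g t) t := by
      apply intervalIntegral.integral_hasDerivAt_right
      · apply ContinuousOn.intervalIntegrable
        apply hgcont.mono
        rw [Set.uIcc_of_le ht.1.le]
        exact Set.Icc_subset_Icc le_rfl ht.2.le
      · exact ⟨Set.Icc 0 1, hmem, hgcont.aestronglyMeasurable measurableSet_Icc⟩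
      · exact (hgcont t htIcc).continuousAt hmem
    exact hlog.sub ((hint.const_mul (2 * C)))
  have hderiv_nonpos : ∀ t ∈ Set.Ioo (0:ℝ) 1, deriv F t ≤ 0 := by
    intro t ht
    have htIcc : t ∈ Set.Icc (0:ℝ) 1 := Set.Ioo_subset_Icc_self ht
    rw [(key t ht).deriv]
    have hbound := fderiv_bound_aux η C (γ t) (hx _ (hγU t htIcc)) (hy _ (hγU t htIcc))
      (derivWithin γ (Set.Icc 0 1) t)
    have hpos' : 0 < η (γ t) := hpos _ (hγU t htIcc)
    have h1 : fderiv ℝ η (γ t) (derivWithin γ (Set.Icc 0 1) t) ≤ 2 * C * η (γ t) * g t :=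
      le_trans (le_abs_self _) hbound
    have h2 : (η (γ t))⁻¹ * fderiv ℝ η (γ t) (derivWithin γ (Set.Icc 0 1) t)
        ≤ 2 * C * g t := by
      rw [inv_mul_le_iff₀ hpos']
      calc fderiv ℝ η (γ t) (derivWithin γ (Set.Icc 0 1) t)
          ≤ 2 * C * η (γ t) * g t := h1
        _ = η (γ t) * (2 * C * g t) := by ring
    linarith
  have hanti : AntitoneOn F (Set.Icc 0 1) := by
    apply antitoneOn_of_deriv_nonpos (convex_Icc 0 1) hFc
    · intro t ht
      rw [interior_Icc] at ht
      exact (key t ht).differentiableAt.differentiableWithinAt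
    · intro t ht
      rw [interior_Icc] at ht
      exact hderiv_nonpos t ht
  have hF10 : F 1 ≤ F 0 :=
    hanti (Set.left_mem_Icc.2 (by norm_num)) (Set.right_mem_Icc.2 (by norm_num)) (by norm_num)
  have hF0 : F 0 = Real.log (η s₀) := by simp [hFdef, hγ0]
  have hF1 : F 1 = Real.log (η s) - 2 * C * ∫ u in (0:ℝ)..1, g u := by simp [hFdef, hγ1]
  have hintL : 2 * C * (∫ u in (0:ℝ)..1, g u) ≤ 2 * C * L := by
    apply mul_le_mul_of_nonneg_left hlen (by linarith)
  have hlog : Real.log (η s) ≤ Real.log (η s₀) + 2 * C * L := by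
    rw [hF0] at hF10; rw [hF1] at hF10; linarith
  have := Real.exp_le_exp.2 hlog
  rwa [Real.exp_log (hpos s hs), Real.exp_add, Real.exp_log (hpos s₀ hs₀)] at this
end

section
/- Let r > 0, let D* := { z ∈ ℂ : 0 < |z| < r } be the punctured open disc of radius r, and let A be a subset of D* that is closed in D* and discrete. Set U := D* \ A. Then there exist a point s₀ ∈ U and a constant L > 0 such that every point s ∈ U can be joined to s₀ by a C¹ path of length at most L in U, i.e. there exists a continuously differentiable map γ : [0,1] → ℂ with γ(0) = s₀, γ(1) = s, γ(t) ∈ U for all t ∈ [0,1], and ∫₀¹ ‖γ'(t)‖ dt ≤ L. -/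
open Set

lemma my_expNegInvGlue_mono : Monotone expNegInvGlue := by
  intro x y hxy
  rcases le_or_gt x 0 with hx | hx
  · rw [expNegInvGlue.zero_of_nonpos hx]; exact expNegInvGlue.nonneg y
  · have hy : 0 < y := lt_of_lt_of_le hx hxy
    rw [show expNegInvGlue x = Real.exp (-x⁻¹) by simp [expNegInvGlue, hx.not_ge],
        show expNegInvGlue y = Real.exp (-y⁻¹) by simp [expNegInvGlue, hy.not_ge]]
    have : y⁻¹ ≤ x⁻¹ := by gcongr
    exact Real.exp_le_exp.2 (by linarith)

lemma my_smoothTransition_mono : Monotone Real.smoothTransition := by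
  intro x y hxy
  unfold Real.smoothTransition
  rw [div_le_div_iff₀ (Real.smoothTransition.pos_denom x) (Real.smoothTransition.pos_denom y)]
  have h1 := my_expNegInvGlue_mono hxy
  have h2 : expNegInvGlue (1 - y) ≤ expNegInvGlue (1 - x) :=
    my_expNegInvGlue_mono (by linarith)
  nlinarith [mul_le_mul h1 h2 (expNegInvGlue.nonneg (1 - y)) (expNegInvGlue.nonneg y),
    expNegInvGlue.nonneg x, expNegInvGlue.nonneg (1 - x)]

lemma my_deriv_nonneg_of_monotone {f : ℝ → ℝ} (hf : Monotone f) {x d : ℝ}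
    (hd : HasDerivAt f d x) : 0 ≤ d := by
  have h := hasDerivAt_iff_tendsto_slope.1 hd
  refine ge_of_tendsto h ?_
  filter_upwards [self_mem_nhdsWithin] with y hy
  rcases (Ne.lt_or_gt (hy : y ≠ x)) with h1 | h1
  · rw [slope_def_field]
    exact div_nonneg_iff.2 (Or.inr ⟨by linarith [hf h1.le], by linarith⟩)
  · rw [slope_def_field]
    exact div_nonneg (by linarith [hf h1.le]) (by linarith)

lemma my_countable_of_separated {A : Set ℂ}
    (h : ∀ a ∈ A, ∃ ε > 0, Metric.ball a ε ∩ A = {a}) : A.Countable := by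
  classical
  choose! ε hε hball using h
  have hd : Pairwise (Function.onFun Disjoint fun a : A => Metric.ball (a : ℂ) (ε a / 2)) := by
    rintro ⟨a, ha⟩ ⟨b, hb⟩ hab
    refine Set.disjoint_left.2 fun z hza hzb => ?_
    simp only [Metric.mem_ball] at hza hzb
    have hdist : dist a b < ε a / 2 + ε b / 2 := by
      calc dist a b ≤ dist a z + dist z b := dist_triangle a z b
        _ < ε a / 2 + ε b / 2 := by
            rw [dist_comm a z] at *
            have := hzb
            rw [dist_comm z b] at this ⊢
            exact add_lt_add hza this
    have hc := dist_comm a b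
    rcases le_total (ε a) (ε b) with hle | hle
    · have hmem : a ∈ Metric.ball b (ε b) ∩ A :=
        ⟨Metric.mem_ball.2 (by linarith), ha⟩
      rw [hball b hb] at hmem
      exact hab (Subtype.ext hmem)
    · have hmem : b ∈ Metric.ball a (ε a) ∩ A :=
        ⟨Metric.mem_ball.2 (by linarith), hb⟩
      rw [hball a ha] at hmem
      exact hab (Subtype.ext hmem.symm)
  have : Countable A :=
    hd.countable_of_isOpen_disjoint (fun _ => Metric.isOpen_ball)
      (fun a => Metric.nonempty_ball.2 (by have := hε a a.2; linarith))
  exact Set.countable_coe_iff.1 this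

lemma my_exists_Ioo_notMem {a b : ℝ} (hab : a < b) {S : Set ℝ} (hS : S.Countable) :
    ∃ x, x ∈ Set.Ioo a b ∧ x ∉ S := by
  by_contra h
  push_neg at h
  have hsub : Set.Ioo a b ⊆ S := fun x hx => h x hx
  have h1 := MeasureTheory.measure_mono (μ := MeasureTheory.volume) hsub
  rw [hS.measure_zero, Real.volume_Ioo] at h1
  simp only [nonpos_iff_eq_zero, ENNReal.ofReal_eq_zero] at h1
  linarith
set_option maxHeartbeats 1600000 in
/-- The complement in a punctured disc of a closed discrete subset satisfies
the uniform bounded-length C¹-path-connectivity hypothesis of Lemma 3.4. -/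
theorem punctured_disc_minus_discrete_bounded_paths
    (r : ℝ) (hr : 0 < r)
    (A : Set ℂ)
    (hAsub : A ⊆ {z : ℂ | 0 < ‖z‖ ∧ ‖z‖ < r})
    (hAclosed : closure A ∩ {z : ℂ | 0 < ‖z‖ ∧ ‖z‖ < r} ⊆ A)
    (hAdiscrete : ∀ a ∈ A, ∃ ε > 0, Metric.ball a ε ∩ A = {a}) :
    ∃ s₀ ∈ ({z : ℂ | 0 < ‖z‖ ∧ ‖z‖ < r} \ A),
      ∃ L > 0,
        ∀ s ∈ ({z : ℂ | 0 < ‖z‖ ∧ ‖z‖ < r} \ A),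
          ∃ γ : ℝ → ℂ,
            ContDiffOn ℝ 1 γ (Set.Icc 0 1) ∧
            γ 0 = s₀ ∧ γ 1 = s ∧
            (∀ t ∈ Set.Icc (0:ℝ) 1,
              γ t ∈ ({z : ℂ | 0 < ‖z‖ ∧ ‖z‖ < r} \ A)) ∧
            (∫ t in (0:ℝ)..1, ‖derivWithin γ (Set.Icc 0 1) t‖) ≤ L := by
  classical
  have hAcount : A.Countable := my_countable_of_separated hAdiscrete
  -- choose a good base radius ρ₀ : circle of radius ρ₀ misses A
  obtain ⟨ρ₀, hρ₀Ioo, hρ₀⟩ := my_exists_Ioo_notMem hr (hAcount.image (Norm.norm : ℂ → ℝ))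
  obtain ⟨hρ₀pos, hρ₀lt⟩ := hρ₀Ioo
  have hs₀abs : ‖(ρ₀ : ℂ)‖ = ρ₀ := by
    rw [Complex.norm_real, Real.norm_eq_abs, abs_of_pos hρ₀pos]
  refine ⟨(ρ₀ : ℂ), ⟨⟨by rw [hs₀abs]; exact hρ₀pos, by rw [hs₀abs]; exact hρ₀lt⟩,
    fun h => hρ₀ ⟨(ρ₀ : ℂ), h, hs₀abs⟩⟩, 7 * r, by linarith, ?_⟩
  intro s hs
  obtain ⟨⟨hρ₁pos, hρ₁lt⟩, hsA⟩ := hs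
  set ρ₁ : ℝ := ‖s‖ with hρ₁def
  set α : ℝ := Complex.arg s with hαdef
  -- a ball around s missing A
  have hsncl : s ∉ closure A := fun h => hsA (hAclosed ⟨h, ⟨hρ₁pos, hρ₁lt⟩⟩)
  obtain ⟨δ, hδpos, hδ⟩ := Metric.isOpen_iff.1 isClosed_closure.isOpen_compl s hsncl
  have hballA : ∀ z, z ∈ Metric.ball s δ → z ∉ A := fun z hz ha =>
    (hδ hz) (subset_closure ha)
  -- bad angles
  set Bad : Set ℝ :=
    {φ : ℝ | ∃ a ∈ A, ((‖a‖ : ℝ) : ℂ) * Complex.exp ((φ : ℂ) * Complex.I) = a} with hBaddef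
  have hBadc : Bad.Countable := by
    have hsub : Bad ⊆ ⋃ a ∈ A,
        {φ : ℝ | ((‖a‖ : ℝ) : ℂ) * Complex.exp ((φ : ℂ) * Complex.I) = a} := by
      rintro φ ⟨a, ha, h⟩; exact Set.mem_biUnion ha h
    refine Set.Countable.mono hsub (hAcount.biUnion fun a ha => ?_)
    by_cases hne : ∃ φ₀ : ℝ, ((‖a‖ : ℝ) : ℂ) * Complex.exp ((φ₀ : ℂ) * Complex.I) = a
    · obtain ⟨φ₀, hφ₀⟩ := hne
      have habs : ((‖a‖ : ℝ) : ℂ) ≠ 0 := by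
        exact_mod_cast (hAsub ha).1.ne'
      refine Set.Countable.mono ?_
        (Set.countable_range (fun n : ℤ => φ₀ + (n : ℝ) * (2 * Real.pi)))
      intro φ hφ
      have hexp : Complex.exp ((φ : ℂ) * Complex.I) = Complex.exp ((φ₀ : ℂ) * Complex.I) :=
        mul_left_cancel₀ habs (by rw [hφ, hφ₀])
      obtain ⟨n, hn⟩ := Complex.exp_eq_exp_iff_exists_int.1 hexp
      refine ⟨n, ?_⟩
      show φ₀ + (n : ℝ) * (2 * Real.pi) = φ
      have h2 : ((φ₀ + (n : ℝ) * (2 * Real.pi) : ℝ) : ℂ) * Complex.I = (φ : ℂ) * Complex.I := by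
        push_cast
        rw [hn]; ring
      have h3 := mul_right_cancel₀ Complex.I_ne_zero h2
      exact_mod_cast h3
    · have he : {φ : ℝ | ((‖a‖ : ℝ) : ℂ) * Complex.exp ((φ : ℂ) * Complex.I) = a} = ∅ :=
        Set.eq_empty_iff_forall_notMem.2 fun φ h => hne ⟨φ, h⟩
      rw [he]; exact Set.countable_empty
  -- choose good angle θ close to α
  set η : ℝ := min 1 (δ / (2 * r)) with hηdef
  have hηpos : 0 < η := lt_min one_pos (div_pos hδpos (by linarith))
  obtain ⟨θ, hθIoo, hθBad⟩ := my_exists_Ioo_notMem (show α - η < α by linarith) hBadc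
  obtain ⟨hθlo, hθhi⟩ := hθIoo
  have hθα : |α - θ| < η := by
    rw [abs_of_pos (by linarith)]; linarith
  have hθα1 : |α - θ| ≤ 1 := le_trans hθα.le (min_le_left _ _)
  have hθαδ : |α - θ| < δ / (2 * r) := lt_of_lt_of_le hθα (min_le_right _ _)
  have hαpi : |α| ≤ Real.pi := Complex.abs_arg_le_pi s
  -- smoothness facts
  have hσmono : Monotone Real.smoothTransition := my_smoothTransition_mono
  have hσdiff : Differentiable ℝ Real.smoothTransition :=
    (Real.smoothTransition.contDiff (n := 1)).differentiable (by norm_num)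
  have hdσ0 : ∀ x, 0 ≤ deriv Real.smoothTransition x := fun x =>
    my_deriv_nonneg_of_monotone hσmono (hσdiff x).hasDerivAt
  have hdσcont : Continuous (deriv Real.smoothTransition) :=
    (Real.smoothTransition.contDiff (n := 2)).continuous_deriv (by exact_mod_cast one_le_two)
  -- the path
  set Θ : ℝ → ℝ := fun t => θ * Real.smoothTransition (3 * t - 0)
      + (α - θ) * Real.smoothTransition (3 * t - 2) with hΘdef
  set R : ℝ → ℝ := fun t => ρ₀ + (ρ₁ - ρ₀) * Real.smoothTransition (3 * t - 1) with hRdef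
  set γ : ℝ → ℂ := fun t => ((R t : ℝ) : ℂ) * Complex.exp (((Θ t : ℝ) : ℂ) * Complex.I)
    with hγdef
  -- derivatives
  have hd : ∀ c t : ℝ, HasDerivAt (fun u => Real.smoothTransition (3 * u - c))
      (3 * deriv Real.smoothTransition (3 * t - c)) t := by
    intro c t
    have h1 : HasDerivAt (fun u : ℝ => 3 * u - c) 3 t := by
      simpa using ((hasDerivAt_id t).const_mul (3:ℝ)).sub_const c
    have h2 := (hσdiff (3 * t - c)).hasDerivAt
    exact (h2.comp t h1).congr_deriv (mul_comm _ _)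
  have hΘd : ∀ t, HasDerivAt Θ
      (θ * (3 * deriv Real.smoothTransition (3 * t - 0))
        + (α - θ) * (3 * deriv Real.smoothTransition (3 * t - 2))) t := fun t =>
    ((hd 0 t).const_mul θ).add ((hd 2 t).const_mul (α - θ))
  have hRd : ∀ t, HasDerivAt R ((ρ₁ - ρ₀) * (3 * deriv Real.smoothTransition (3 * t - 1))) t :=
    fun t => ((hd 1 t).const_mul (ρ₁ - ρ₀)).const_add ρ₀
  set Θ' : ℝ → ℝ := fun t => θ * (3 * deriv Real.smoothTransition (3 * t - 0))
      + (α - θ) * (3 * deriv Real.smoothTransition (3 * t - 2)) with hΘ'def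
  set R' : ℝ → ℝ := fun t => (ρ₁ - ρ₀) * (3 * deriv Real.smoothTransition (3 * t - 1)) with hR'def
  set f : ℝ → ℂ := fun t => ((R' t : ℝ) : ℂ) * Complex.exp (((Θ t : ℝ) : ℂ) * Complex.I)
      + ((R t : ℝ) : ℂ) * (Complex.exp (((Θ t : ℝ) : ℂ) * Complex.I)
        * (((Θ' t : ℝ) : ℂ) * Complex.I)) with hfdef
  have hγd : ∀ t, HasDerivAt γ (f t) t := by
    intro t
    have h1 : HasDerivAt (fun u => ((R u : ℝ) : ℂ)) ((R' t : ℝ) : ℂ) t := (hRd t).ofReal_comp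
    have h2 : HasDerivAt (fun u => ((Θ u : ℝ) : ℂ)) ((Θ' t : ℝ) : ℂ) t := (hΘd t).ofReal_comp
    have h3 := (h2.mul_const Complex.I).cexp
    exact h1.mul h3
  -- bounds on R
  have hR01 : ∀ t, 0 < R t ∧ R t < r := by
    intro t
    have h1 := Real.smoothTransition.nonneg (3 * t - 1)
    have h2 := Real.smoothTransition.le_one (3 * t - 1)
    rw [hRdef]; simp only []
    rcases le_total ρ₀ ρ₁ with hc | hc
    · constructor
      · nlinarith [mul_nonneg (sub_nonneg.2 hc) h1]
      · nlinarith [mul_nonneg (sub_nonneg.2 hc) (sub_nonneg.2 h2)]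
    · constructor
      · nlinarith [mul_nonneg (sub_nonneg.2 hc) (sub_nonneg.2 h2)]
      · nlinarith [mul_nonneg (sub_nonneg.2 hc) h1]
  have habsγ : ∀ t, ‖γ t‖ = R t := by
    intro t
    rw [hγdef]
    simp only [norm_mul, Complex.norm_real, Real.norm_eq_abs, Complex.norm_exp_ofReal_mul_I, mul_one,
      abs_of_pos (hR01 t).1]
  -- value at 0 and 1
  have hσ0 : ∀ x : ℝ, x ≤ 0 → Real.smoothTransition x = 0 :=
    fun x hx => Real.smoothTransition.zero_of_nonpos hx
  have hσ1 : ∀ x : ℝ, 1 ≤ x → Real.smoothTransition x = 1 :=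
    fun x hx => Real.smoothTransition.one_of_one_le hx
  have hγ0 : γ 0 = (ρ₀ : ℂ) := by
    rw [hγdef]
    simp only [hΘdef, hRdef]
    rw [hσ0 (3 * 0 - 0) (by norm_num), hσ0 (3 * 0 - 2) (by norm_num),
      hσ0 (3 * 0 - 1) (by norm_num)]
    norm_num
  have hγ1 : γ 1 = s := by
    rw [hγdef]
    simp only [hΘdef, hRdef]
    rw [hσ1 (3 * 1 - 0) (by norm_num), hσ1 (3 * 1 - 2) (by norm_num),
      hσ1 (3 * 1 - 1) (by norm_num)]
    norm_num
    exact Complex.norm_mul_exp_arg_mul_I s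
  refine ⟨γ, ?_, hγ0, hγ1, ?_, ?_⟩
  · -- smoothness
    have haff : ∀ c : ℝ, ContDiff ℝ 1 (fun t : ℝ => 3 * t - c) := fun c =>
      (contDiff_const.mul contDiff_id).sub contDiff_const
    have hσcd : ContDiff ℝ 1 Real.smoothTransition := Real.smoothTransition.contDiff (n := 1)
    have hΘcd : ContDiff ℝ 1 Θ :=
      (contDiff_const.mul (hσcd.comp (haff 0))).add (contDiff_const.mul (hσcd.comp (haff 2)))
    have hRcd : ContDiff ℝ 1 R :=
      contDiff_const.add (contDiff_const.mul (hσcd.comp (haff 1)))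
    have hγcd : ContDiff ℝ 1 γ :=
      (Complex.ofRealCLM.contDiff.comp hRcd).mul
        (Complex.contDiff_exp.comp ((Complex.ofRealCLM.contDiff.comp hΘcd).mul contDiff_const))
    exact hγcd.contDiffOn
  · -- membership
    intro t ht
    refine ⟨⟨by rw [habsγ t]; exact (hR01 t).1, by rw [habsγ t]; exact (hR01 t).2⟩, ?_⟩
    rcases le_or_gt t (1/3) with h13 | h13
    · -- on the base circle
      intro hA
      apply hρ₀
      refine ⟨γ t, hA, ?_⟩
      rw [habsγ t, hRdef]
      simp only []
      rw [hσ0 (3 * t - 1) (by linarith)]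
      ring
    · rcases le_or_gt t (2/3) with h23 | h23
      · -- on the good ray
        intro hA
        apply hθBad
        refine ⟨γ t, hA, ?_⟩
        rw [habsγ t]
        have hΘt : Θ t = θ := by
          rw [hΘdef]; simp only []
          rw [hσ1 (3 * t - 0) (by linarith), hσ0 (3 * t - 2) (by linarith)]
          ring
        rw [hγdef]
        simp only []
        rw [hΘt]
      · -- near s
        intro hA
        refine hballA (γ t) ?_ hA
        rw [Metric.mem_ball, Complex.dist_eq]
        have hRt : R t = ρ₁ := by
          rw [hRdef]; simp only []
          rw [hσ1 (3 * t - 1) (by linarith)]; ring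
        have hu0 := Real.smoothTransition.nonneg (3 * t - 2)
        have hu1 := Real.smoothTransition.le_one (3 * t - 2)
        have hΘt : Θ t = θ + (α - θ) * Real.smoothTransition (3 * t - 2) := by
          rw [hΘdef]; simp only []
          rw [hσ1 (3 * t - 0) (by linarith)]; ring
        have hΘα : |Θ t - α| ≤ |α - θ| := by
          rw [hΘt]
          have : θ + (α - θ) * Real.smoothTransition (3 * t - 2) - α
              = (α - θ) * (Real.smoothTransition (3 * t - 2) - 1) := by ring
          rw [this, abs_mul]
          have h1 : |Real.smoothTransition (3 * t - 2) - 1| ≤ 1 := by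
            rw [abs_le]; constructor <;> linarith
          nlinarith [abs_nonneg (α - θ)]
        -- γ t - s = ρ₁ * exp(α I) * (exp((Θ t - α) I) - 1)
        have hsplit : γ t - s = (ρ₁ : ℂ) * Complex.exp ((α : ℂ) * Complex.I)
            * (Complex.exp (((Θ t - α : ℝ) : ℂ) * Complex.I) - 1) := by
          have hs_eq : ((ρ₁ : ℝ) : ℂ) * Complex.exp ((α : ℂ) * Complex.I) = s :=
            Complex.norm_mul_exp_arg_mul_I s
          have hγt : γ t = ((ρ₁ : ℝ) : ℂ) * Complex.exp (((Θ t : ℝ) : ℂ) * Complex.I) := by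
            rw [hγdef]
            simp only []
            rw [hRt]
          have hexp : Complex.exp (((Θ t : ℝ) : ℂ) * Complex.I)
              = Complex.exp ((α : ℂ) * Complex.I)
                * Complex.exp (((Θ t - α : ℝ) : ℂ) * Complex.I) := by
            rw [← Complex.exp_add]
            congr 1
            push_cast
            ring
          rw [hγt, ← hs_eq, hexp]
          ring
        have habs1 : ‖Complex.exp (((Θ t - α : ℝ) : ℂ) * Complex.I) - 1‖
            ≤ 2 * |Θ t - α| := by
          have h0 : ‖((Θ t - α : ℝ) : ℂ) * Complex.I‖ = |Θ t - α| := by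
            simp only [norm_mul, Complex.norm_real, Real.norm_eq_abs, Complex.norm_I, mul_one]
          have := Complex.norm_exp_sub_one_le
            (x := ((Θ t - α : ℝ) : ℂ) * Complex.I) (by rw [h0]; exact le_trans hΘα hθα1)
          rwa [h0] at this
        rw [hsplit]
        rw [norm_mul, norm_mul, Complex.norm_real, Real.norm_eq_abs, Complex.norm_exp_ofReal_mul_I, mul_one,
          abs_of_pos hρ₁pos]
        have hle : ‖Complex.exp (((Θ t - α : ℝ) : ℂ) * Complex.I) - 1‖
            ≤ 2 * |α - θ| := le_trans habs1 (by linarith)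
        have h2r : ρ₁ * (2 * |α - θ|) < δ := by
          have h1 : |α - θ| * (2 * r) < δ :=
            (lt_div_iff₀ (by linarith : (0:ℝ) < 2 * r)).1 hθαδ
          have hp : (2 * |α - θ|) * ρ₁ ≤ (2 * |α - θ|) * r :=
            mul_le_mul_of_nonneg_left hρ₁lt.le (by positivity)
          nlinarith [hp, h1]
        have hq : ρ₁ * ‖Complex.exp (((Θ t - α : ℝ) : ℂ) * Complex.I) - 1‖
            ≤ ρ₁ * (2 * |α - θ|) := mul_le_mul_of_nonneg_left hle hρ₁pos.le
        linarith [hq, h2r]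
  · -- length
    have hdc : ∀ c : ℝ, Continuous (fun t => 3 * deriv Real.smoothTransition (3 * t - c)) :=
      fun c => continuous_const.mul (hdσcont.comp (by continuity))
    have hΘcont : Continuous Θ := by
      rw [hΘdef]
      exact (continuous_const.mul (Real.smoothTransition.continuous.comp (by continuity))).add
        (continuous_const.mul (Real.smoothTransition.continuous.comp (by continuity)))
    have hRcont : Continuous R := by
      rw [hRdef]
      exact continuous_const.add
        (continuous_const.mul (Real.smoothTransition.continuous.comp (by continuity)))
    have hΘ'cont : Continuous Θ' := by
      rw [hΘ'def]
      exact (continuous_const.mul (hdc 0)).add (continuous_const.mul (hdc 2))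
    have hR'cont : Continuous R' := by
      rw [hR'def]
      exact continuous_const.mul (hdc 1)
    have hfcont : Continuous f := by
      rw [hfdef]
      refine Continuous.add ?_ ?_
      · exact (Complex.continuous_ofReal.comp hR'cont).mul
          (((Complex.continuous_ofReal.comp hΘcont).mul continuous_const).cexp)
      · exact (Complex.continuous_ofReal.comp hRcont).mul
          ((((Complex.continuous_ofReal.comp hΘcont).mul continuous_const).cexp).mul
            ((Complex.continuous_ofReal.comp hΘ'cont).mul continuous_const))
    set g : ℝ → ℝ := fun t => |ρ₁ - ρ₀| * (3 * deriv Real.smoothTransition (3 * t - 1))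
      + r * (|θ| * (3 * deriv Real.smoothTransition (3 * t - 0))
        + |α - θ| * (3 * deriv Real.smoothTransition (3 * t - 2))) with hgdef
    have habs3 : ∀ x : ℝ, |3 * deriv Real.smoothTransition x|
        = 3 * deriv Real.smoothTransition x := fun x =>
      abs_of_nonneg (mul_nonneg (by norm_num) (hdσ0 x))
    have hpt : ∀ t, ‖f t‖ ≤ g t := by
      intro t
      have hnorm : ‖f t‖ ≤ |R' t| + |R t| * |Θ' t| := by
        rw [hfdef]
        refine le_trans (norm_add_le _ _) ?_
        simp only [norm_mul, Complex.norm_real, Real.norm_eq_abs,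
          Complex.norm_exp_ofReal_mul_I, mul_one, Complex.norm_I, one_mul]
        exact le_refl _
      have h1 : |R' t| = |ρ₁ - ρ₀| * (3 * deriv Real.smoothTransition (3 * t - 1)) := by
        rw [hR'def]
        simp only []
        rw [abs_mul, habs3 (3 * t - 1)]
      have h2 : |Θ' t| ≤ |θ| * (3 * deriv Real.smoothTransition (3 * t - 0))
          + |α - θ| * (3 * deriv Real.smoothTransition (3 * t - 2)) := by
        rw [hΘ'def]
        simp only []
        refine le_trans (abs_add_le _ _) ?_
        rw [abs_mul θ, abs_mul (α - θ), habs3 (3 * t - 0), habs3 (3 * t - 2)]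
      have h3 : |R t| ≤ r := by
        rw [abs_of_pos (hR01 t).1]; exact (hR01 t).2.le
      have h2' : (0:ℝ) ≤ |θ| * (3 * deriv Real.smoothTransition (3 * t - 0))
          + |α - θ| * (3 * deriv Real.smoothTransition (3 * t - 2)) :=
        le_trans (abs_nonneg _) h2
      calc ‖f t‖ ≤ |R' t| + |R t| * |Θ' t| := hnorm
        _ ≤ |ρ₁ - ρ₀| * (3 * deriv Real.smoothTransition (3 * t - 1))
            + r * (|θ| * (3 * deriv Real.smoothTransition (3 * t - 0))
              + |α - θ| * (3 * deriv Real.smoothTransition (3 * t - 2))) := by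
            refine add_le_add (le_of_eq h1) ?_
            exact mul_le_mul h3 h2 (abs_nonneg _) (by linarith)
        _ = g t := by rw [hgdef]
    have hIc : ∀ c : ℝ, IntervalIntegrable
        (fun t => 3 * deriv Real.smoothTransition (3 * t - c)) MeasureTheory.volume 0 1 :=
      fun c => (hdc c).intervalIntegrable 0 1
    have hgInt : IntervalIntegrable g MeasureTheory.volume 0 1 := by
      rw [hgdef]
      exact ((hIc 1).const_mul _).add
        ((((hIc 0).const_mul _).add ((hIc 2).const_mul _)).const_mul r)
    have hfInt : IntervalIntegrable (fun t => ‖f t‖) MeasureTheory.volume 0 1 :=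
      (hfcont.norm).intervalIntegrable 0 1
    have hIval : ∀ c : ℝ, (∫ t in (0:ℝ)..1, 3 * deriv Real.smoothTransition (3 * t - c))
        = Real.smoothTransition (3 * 1 - c) - Real.smoothTransition (3 * 0 - c) := fun c =>
      intervalIntegral.integral_eq_sub_of_hasDerivAt (fun t _ => hd c t) (hIc c)
    have hgval : (∫ t in (0:ℝ)..1, g t) = |ρ₁ - ρ₀| + r * (|θ| + |α - θ|) := by
      have hI1 : (∫ t in (0:ℝ)..1, 3 * deriv Real.smoothTransition (3 * t - 1)) = 1 := by
        rw [hIval 1, hσ1 (3 * 1 - 1) (by norm_num), hσ0 (3 * 0 - 1) (by norm_num)]; norm_num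
      have hI0 : (∫ t in (0:ℝ)..1, 3 * deriv Real.smoothTransition (3 * t - 0)) = 1 := by
        rw [hIval 0, hσ1 (3 * 1 - 0) (by norm_num), hσ0 (3 * 0 - 0) (by norm_num)]; norm_num
      have hI2 : (∫ t in (0:ℝ)..1, 3 * deriv Real.smoothTransition (3 * t - 2)) = 1 := by
        rw [hIval 2, hσ1 (3 * 1 - 2) (by norm_num), hσ0 (3 * 0 - 2) (by norm_num)]; norm_num
      have e1 : (∫ t in (0:ℝ)..1, g t)
          = (∫ t in (0:ℝ)..1, |ρ₁ - ρ₀| * (3 * deriv Real.smoothTransition (3 * t - 1)))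
            + ∫ t in (0:ℝ)..1, r * (|θ| * (3 * deriv Real.smoothTransition (3 * t - 0))
              + |α - θ| * (3 * deriv Real.smoothTransition (3 * t - 2))) := by
        simp only [hgdef]
        exact intervalIntegral.integral_add ((hIc 1).const_mul _)
          ((((hIc 0).const_mul _).add ((hIc 2).const_mul _)).const_mul r)
      have e2 : (∫ t in (0:ℝ)..1, r * (|θ| * (3 * deriv Real.smoothTransition (3 * t - 0))
            + |α - θ| * (3 * deriv Real.smoothTransition (3 * t - 2))))
          = r * ((∫ t in (0:ℝ)..1, |θ| * (3 * deriv Real.smoothTransition (3 * t - 0)))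
            + ∫ t in (0:ℝ)..1, |α - θ| * (3 * deriv Real.smoothTransition (3 * t - 2))) := by
        rw [intervalIntegral.integral_const_mul]
        congr 1
        exact intervalIntegral.integral_add ((hIc 0).const_mul _) ((hIc 2).const_mul _)
      rw [e1, e2, intervalIntegral.integral_const_mul (|ρ₁ - ρ₀|),
        intervalIntegral.integral_const_mul (|θ|), intervalIntegral.integral_const_mul (|α - θ|),
        hI0, hI1, hI2]
      ring
    calc (∫ t in (0:ℝ)..1, ‖derivWithin γ (Set.Icc 0 1) t‖)
        = ∫ t in (0:ℝ)..1, ‖f t‖ := by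
          refine intervalIntegral.integral_congr ?_
          intro t ht
          rw [Set.uIcc_of_le (by norm_num : (0:ℝ) ≤ 1)] at ht
          show ‖derivWithin γ (Set.Icc 0 1) t‖ = ‖f t‖
          rw [(hγd t).hasDerivWithinAt.derivWithin (uniqueDiffOn_Icc one_pos t ht)]
      _ ≤ ∫ t in (0:ℝ)..1, g t :=
          intervalIntegral.integral_mono_on (by norm_num) hfInt hgInt (fun t _ => hpt t)
      _ = |ρ₁ - ρ₀| + r * (|θ| + |α - θ|) := hgval
      _ ≤ 7 * r := by
          have h1 : |ρ₁ - ρ₀| ≤ r := by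
            rw [abs_le]; constructor <;> linarith
          have h2 : |θ| ≤ Real.pi + 1 := by
            have h := abs_add_le α (θ - α)
            rw [abs_sub_comm θ α] at h
            have he : α + (θ - α) = θ := by ring
            rw [he] at h
            linarith
          have hπ : Real.pi ≤ 4 := Real.pi_le_four
          nlinarith [abs_nonneg (α - θ), abs_nonneg θ, hr.le]
end
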